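/- arXiv:2005.09318 — 2 statements merged into one kernel-verified Lean document; each statement's English description precedes it below -/
import Mathlib

section
/- Let $f : \mathbb{R} \to \mathbb{R}$ be differentiable with $|f| \le 1$, $f'$ Lipschitz of constant $1$, and $f'$ compactly supported. Then $\int_{-\sqrt 2}^{\sqrt 2} |f'(t)|\, dt \le 2$. -/
open Set MeasureTheory intervalIntegral Real


lemma lip_abs (F : ℝ → ℝ) (hl : LipschitzWith 1 (deriv F)) (x y : ℝ) :
    |deriv F x - deriv F y| ≤ |x - y| := by
  simpa [Real.dist_eq] using hl.dist_le_mul x y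

lemma ftc (F : ℝ → ℝ) (hd : Differentiable ℝ F) (hl : LipschitzWith 1 (deriv F)) (a b : ℝ) :
    ∫ u in a..b, deriv F u = F b - F a :=
  integral_deriv_eq_sub (fun x _ => (hd x)) ((hl.continuous).intervalIntegrable a b)

/-- energy from a rest point on the left, along a nonnegative-derivative interval -/
lemma energy_right (F : ℝ → ℝ) (hd : Differentiable ℝ F) (hl : LipschitzWith 1 (deriv F))
    {a t : ℝ} (hat : a ≤ t) (ha : deriv F a = 0)
    (hpos : ∀ u ∈ Icc a t, 0 ≤ deriv F u) :
    (deriv F t)^2 ≤ 2 * (F t - F a) := by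
  set d := deriv F t with hdd
  have hd0 : 0 ≤ d := hpos t ⟨hat, le_refl t⟩
  have hdta : d ≤ t - a := by
    have := lip_abs F hl t a
    rw [ha, sub_zero, abs_of_nonneg hd0] at this
    calc d ≤ |t - a| := this
    _ = t - a := abs_of_nonneg (by linarith)
  have h1 : F t - F a = ∫ u in a..t, deriv F u := (ftc F hd hl a t).symm
  have hsplit : (∫ u in a..t, deriv F u)
      = (∫ u in a..(t-d), deriv F u) + ∫ u in (t-d)..t, deriv F u := by
    rw [integral_add_adjacent_intervals ((hl.continuous).intervalIntegrable _ _)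
      ((hl.continuous).intervalIntegrable _ _)]
  have hnn : 0 ≤ ∫ u in a..(t-d), deriv F u := by
    apply intervalIntegral.integral_nonneg (by linarith)
    intro u hu; exact hpos u ⟨hu.1, by linarith [hu.2]⟩
  have h2 : ∫ u in (t-d)..t, (d - (t - u)) ≤ ∫ u in (t-d)..t, deriv F u := by
    apply integral_mono_on (by linarith)
      (by apply Continuous.intervalIntegrable; continuity)
      ((hl.continuous).intervalIntegrable _ _)
    intro u hu
    have h := lip_abs F hl u t
    rw [← hdd] at h
    have h' : |u - t| = t - u := by rw [abs_sub_comm]; exact abs_of_nonneg (by linarith [hu.2])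
    rw [h'] at h
    linarith [(abs_le.1 h).1]
  have h3 : (∫ u in (t-d)..t, (d - (t - u))) = d^2/2 := by
    have he : (fun u => d - (t - u)) = fun u => u - (t - d) := by funext u; ring
    rw [he]
    rw [intervalIntegral.integral_sub (by apply Continuous.intervalIntegrable; continuity)
      (by apply Continuous.intervalIntegrable; continuity)]
    rw [integral_id, intervalIntegral.integral_const]
    simp [smul_eq_mul]; ring
  nlinarith [h2, h3, hnn]

/-- energy from a rest point on the right -/
lemma energy_left (F : ℝ → ℝ) (hd : Differentiable ℝ F) (hl : LipschitzWith 1 (deriv F))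
    {t b : ℝ} (htb : t ≤ b) (hb : deriv F b = 0)
    (hpos : ∀ u ∈ Icc t b, 0 ≤ deriv F u) :
    (deriv F t)^2 ≤ 2 * (F b - F t) := by
  set d := deriv F t with hdd
  have hd0 : 0 ≤ d := hpos t ⟨le_refl t, htb⟩
  have hdta : d ≤ b - t := by
    have := lip_abs F hl t b
    rw [hb, sub_zero, abs_of_nonneg hd0] at this
    calc d ≤ |t - b| := this
    _ = b - t := by rw [abs_sub_comm]; exact abs_of_nonneg (by linarith)
  have h1 : F b - F t = ∫ u in t..b, deriv F u := (ftc F hd hl t b).symm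
  have hsplit : (∫ u in t..b, deriv F u)
      = (∫ u in t..(t+d), deriv F u) + ∫ u in (t+d)..b, deriv F u := by
    rw [integral_add_adjacent_intervals ((hl.continuous).intervalIntegrable _ _)
      ((hl.continuous).intervalIntegrable _ _)]
  have hnn : 0 ≤ ∫ u in (t+d)..b, deriv F u := by
    apply intervalIntegral.integral_nonneg (by linarith)
    intro u hu; exact hpos u ⟨by linarith [hu.1], hu.2⟩
  have h2 : ∫ u in t..(t+d), (d - (u - t)) ≤ ∫ u in t..(t+d), deriv F u := by
    apply integral_mono_on (by linarith)
      (by apply Continuous.intervalIntegrable; continuity)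
      ((hl.continuous).intervalIntegrable _ _)
    intro u hu
    have h := lip_abs F hl u t
    rw [← hdd] at h
    have h' : |u - t| = u - t := abs_of_nonneg (by linarith [hu.1])
    rw [h'] at h
    linarith [(abs_le.1 h).1]
  have h3 : (∫ u in t..(t+d), (d - (u - t))) = d^2/2 := by
    have he : (fun u => d - (u - t)) = fun u => (d + t) - u := by funext u; ring
    rw [he]
    rw [intervalIntegral.integral_sub (by apply Continuous.intervalIntegrable; continuity)
      (by apply Continuous.intervalIntegrable; continuity)]
    rw [integral_id, intervalIntegral.integral_const]
    simp [smul_eq_mul]; ring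
  nlinarith [h2, h3, hnn]

lemma sq_deriv_le_one_sub (F : ℝ → ℝ) (hd : Differentiable ℝ F) (hb : ∀ t, |F t| ≤ 1)
    (hl : LipschitzWith 1 (deriv F)) (t : ℝ) :
    (deriv F t)^2 ≤ 2 * (1 - F t) := by
  set d := deriv F t with hdd
  have key : F t + d^2/2 ≤ 1 := by
    rcases le_or_gt 0 d with hd0 | hd0
    · -- F (t+d) - F t = ∫_t^{t+d} F' ≥ ∫ (d - (u - t)) = d^2/2
      have h1 : F (t + d) - F t = ∫ u in t..(t+d), deriv F u := (ftc F hd hl t (t+d)).symm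
      have h2 : ∫ u in t..(t+d), (d - (u - t)) ≤ ∫ u in t..(t+d), deriv F u := by
        apply integral_mono_on (by linarith)
          (by apply Continuous.intervalIntegrable; continuity)
          ((hl.continuous).intervalIntegrable _ _)
        intro u hu
        have := lip_abs F hl u t
        have : |deriv F u - d| ≤ |u - t| := by rw [hdd]; exact this
        rw [abs_le] at this
        have hut : |u - t| = u - t := abs_of_nonneg (by linarith [hu.1])
        linarith [this.1, hut ▸ this.1]
      have h3 : (∫ u in t..(t+d), (d - (u - t))) = d^2/2 := by
        have : (fun u => d - (u - t)) = fun u => (d + t) - u := by funext u; ring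
        rw [this]
        rw [intervalIntegral.integral_sub (by apply Continuous.intervalIntegrable; continuity)
          (by apply Continuous.intervalIntegrable; continuity)]
        rw [integral_id, intervalIntegral.integral_const]
        simp [smul_eq_mul]; ring
      have h4 : F (t+d) ≤ 1 := (abs_le.1 (hb (t+d))).2
      linarith
    · -- d < 0 : F t - F (t+d) = ∫_{t+d}^t F' ≤ ∫ (d + (t - u)) = -d^2/2
      have h1 : F t - F (t + d) = ∫ u in (t+d)..t, deriv F u := (ftc F hd hl (t+d) t).symm
      have h2 : ∫ u in (t+d)..t, deriv F u ≤ ∫ u in (t+d)..t, (d + (t - u)) := by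
        apply integral_mono_on (by linarith)
          ((hl.continuous).intervalIntegrable _ _)
          (by apply Continuous.intervalIntegrable; continuity)
        intro u hu
        have h := lip_abs F hl u t
        have h' : |deriv F u - d| ≤ |u - t| := by rw [hdd]; exact h
        rw [abs_le] at h'
        have hut : |u - t| = t - u := by rw [abs_sub_comm]; exact abs_of_nonneg (by linarith [hu.2])
        rw [hut] at h'
        linarith [h'.2]
      have h3 : (∫ u in (t+d)..t, (d + (t - u))) = -d^2/2 := by
        have : (fun u => d + (t - u)) = fun u => (d + t) - u := by funext u; ring
        rw [this]
        rw [intervalIntegral.integral_sub (by apply Continuous.intervalIntegrable; continuity)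
          (by apply Continuous.intervalIntegrable; continuity)]
        rw [integral_id, intervalIntegral.integral_const]
        simp [smul_eq_mul]; ring
      have h4 : F (t+d) ≤ 1 := (abs_le.1 (hb (t+d))).2
      linarith
  linarith


lemma deriv_neg_eq (F : ℝ → ℝ) : deriv (fun t => -F t) = fun t => -deriv F t := by
  funext t; exact deriv.neg

lemma lip_neg (F : ℝ → ℝ) (hl : LipschitzWith 1 (deriv F)) :
    LipschitzWith 1 (deriv (fun t => -F t)) := by
  rw [deriv_neg_eq]
  intro x y
  simpa [edist_dist, Real.dist_eq, abs_sub_comm] using hl x y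

lemma sq_deriv_le_one_add (F : ℝ → ℝ) (hd : Differentiable ℝ F) (hb : ∀ t, |F t| ≤ 1)
    (hl : LipschitzWith 1 (deriv F)) (t : ℝ) :
    (deriv F t)^2 ≤ 2 * (1 + F t) := by
  have hb' : ∀ t, |(fun s => -F s) t| ≤ 1 := by intro s; simpa [abs_neg] using hb s
  have h := sq_deriv_le_one_sub (fun s => -F s) hd.neg hb' (lip_neg F hl) t
  rw [deriv_neg_eq] at h
  simp only at h
  nlinarith [h]


lemma lip_sqrt_dec (F : ℝ → ℝ) (hd : Differentiable ℝ F)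
    {a b c : ℝ} (hab : a ≤ b)
    (hc : ∀ t ∈ Icc a b, (deriv F t)^2 ≤ 2*(c - F t)) :
    Real.sqrt (2*(c - F a)) - Real.sqrt (2*(c - F b)) ≤ b - a := by
  set g : ℝ → ℝ := fun t => Real.sqrt (2*(c - F t)) with hg
  have hFc : ∀ t ∈ Icc a b, F t ≤ c := by
    intro t ht; nlinarith [hc t ht, sq_nonneg (deriv F t)]
  have gcont : Continuous g := Real.continuous_sqrt.comp (continuous_const.mul (continuous_const.sub hd.continuous))
  -- key sub-lemma
  have sub : ∀ p q : ℝ, a ≤ p → p ≤ q → q ≤ b → (∀ t ∈ Ico p q, F t < c) →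
      g p - g q ≤ q - p := by
    intro p q hap hpq hqb hlt
    have hmono : MonotoneOn (fun t => g t + t) (Icc p q) := by
      apply monotoneOn_of_deriv_nonneg (convex_Icc p q)
        ((gcont.add continuous_id).continuousOn)
      · intro x hx
        rw [interior_Icc] at hx
        have hpos : 0 < 2*(c - F x) := by
          have := hlt x ⟨le_of_lt hx.1, hx.2⟩; linarith
        have hF := (hd x).hasDerivAt
        have h1 : HasDerivAt (fun t => 2*(c - F t)) (2 * -(deriv F x)) x :=
          (hF.const_sub c).const_mul 2
        have hs : HasDerivAt Real.sqrt (1/(2*Real.sqrt (2*(c - F x)))) (2*(c - F x)) :=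
          hasDerivAt_sqrt (ne_of_gt hpos)
        have hgx : HasDerivAt g (1/(2*Real.sqrt (2*(c - F x))) * (2 * -(deriv F x))) x :=
          hs.comp x h1
        exact ((hgx.add (hasDerivAt_id x)).differentiableAt).differentiableWithinAt
      · intro x hx
        rw [interior_Icc] at hx
        have hpos : 0 < 2*(c - F x) := by
          have := hlt x ⟨le_of_lt hx.1, hx.2⟩; linarith
        have hF := (hd x).hasDerivAt
        have h1 : HasDerivAt (fun t => 2*(c - F t)) (2 * -(deriv F x)) x :=
          (hF.const_sub c).const_mul 2
        have hs : HasDerivAt Real.sqrt (1/(2*Real.sqrt (2*(c - F x)))) (2*(c - F x)) :=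
          hasDerivAt_sqrt (ne_of_gt hpos)
        have hgx : HasDerivAt g (1/(2*Real.sqrt (2*(c - F x))) * (2 * -(deriv F x))) x :=
          hs.comp x h1
        rw [((hgx.add (hasDerivAt_id x)).deriv)]
        have hsq : Real.sqrt ((deriv F x)^2) ≤ Real.sqrt (2*(c - F x)) :=
          Real.sqrt_le_sqrt (hc x ⟨le_trans hap (le_of_lt hx.1), le_trans (le_of_lt hx.2) hqb⟩)
        rw [Real.sqrt_sq_eq_abs] at hsq
        have hds : deriv F x ≤ Real.sqrt (2*(c - F x)) := le_trans (le_abs_self _) hsq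
        have hsqpos : 0 < Real.sqrt (2*(c - F x)) := Real.sqrt_pos.2 hpos
        rw [div_mul_eq_mul_div, one_mul]
        have h2den : (0:ℝ) < 2 * Real.sqrt (2*(c - F x)) := by positivity
        have hkey : (-1 : ℝ) * (2 * Real.sqrt (2*(c - F x))) ≤ (2 * -(deriv F x)) := by
          nlinarith [hds]
        have := (le_div_iff₀ h2den).2 hkey
        linarith
    have h' : g p + p ≤ g q + q := hmono (Set.left_mem_Icc.2 hpq) (Set.right_mem_Icc.2 hpq) hpq
    linarith
  by_cases hS : ∃ t ∈ Icc a b, F t = c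
  · set S : Set ℝ := Icc a b ∩ F ⁻¹' {c} with hSdef
    have hScl : IsClosed S := isClosed_Icc.inter (isClosed_eq hd.continuous continuous_const)
    have hSne : S.Nonempty := by obtain ⟨t, ht, hft⟩ := hS; exact ⟨t, ht, hft⟩
    have hSbd : BddBelow S := ⟨a, fun t ht => ht.1.1⟩
    set t0 := sInf S with ht0
    have ht0S : t0 ∈ S := hScl.csInf_mem hSne hSbd
    have ht0ab : t0 ∈ Icc a b := ht0S.1
    have hgt0 : g t0 = 0 := by
      have : F t0 = c := ht0S.2
      simp [hg, this]
    have hlt : ∀ t ∈ Ico a t0, F t < c := by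
      intro t ht
      rcases lt_or_eq_of_le (hFc t ⟨ht.1, le_trans (le_of_lt ht.2) ht0ab.2⟩) with h | h
      · exact h
      · exfalso
        have : t ∈ S := ⟨⟨ht.1, le_trans (le_of_lt ht.2) ht0ab.2⟩, h⟩
        have := csInf_le hSbd this
        linarith [ht.2]
    have h1 : g a - g t0 ≤ t0 - a := sub a t0 le_rfl ht0ab.1 ht0ab.2 hlt
    have h2 : 0 ≤ g b := Real.sqrt_nonneg _
    have : g a ≤ t0 - a := by rw [hgt0] at h1; linarith
    linarith [ht0ab.2]
  · push_neg at hS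
    have hlt : ∀ t ∈ Ico a b, F t < c := by
      intro t ht
      exact lt_of_le_of_ne (hFc t ⟨ht.1, le_of_lt ht.2⟩) (hS t ⟨ht.1, le_of_lt ht.2⟩)
    exact sub a b le_rfl hab le_rfl hlt


lemma lip_sqrt_inc (F : ℝ → ℝ) (hd : Differentiable ℝ F)
    {a b c : ℝ} (hab : a ≤ b)
    (hc : ∀ t ∈ Icc a b, (deriv F t)^2 ≤ 2*(F t - c)) :
    Real.sqrt (2*(F b - c)) - Real.sqrt (2*(F a - c)) ≤ b - a := by
  set g : ℝ → ℝ := fun t => Real.sqrt (2*(F t - c)) with hg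
  have hFc : ∀ t ∈ Icc a b, c ≤ F t := by
    intro t ht; nlinarith [hc t ht, sq_nonneg (deriv F t)]
  have gcont : Continuous g :=
    Real.continuous_sqrt.comp (continuous_const.mul (hd.continuous.sub continuous_const))
  have sub : ∀ p q : ℝ, a ≤ p → p ≤ q → q ≤ b → (∀ t ∈ Ioc p q, c < F t) →
      g q - g p ≤ q - p := by
    intro p q hap hpq hqb hlt
    have hmono : MonotoneOn (fun t => t - g t) (Icc p q) := by
      apply monotoneOn_of_deriv_nonneg (convex_Icc p q)
        ((continuous_id.sub gcont).continuousOn)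
      · intro x hx
        rw [interior_Icc] at hx
        have hpos : 0 < 2*(F x - c) := by
          have := hlt x ⟨hx.1, le_of_lt hx.2⟩; linarith
        have hF := (hd x).hasDerivAt
        have h1 : HasDerivAt (fun t => 2*(F t - c)) (2 * (deriv F x)) x :=
          (hF.sub_const c).const_mul 2
        have hs : HasDerivAt Real.sqrt (1/(2*Real.sqrt (2*(F x - c)))) (2*(F x - c)) :=
          hasDerivAt_sqrt (ne_of_gt hpos)
        have hgx : HasDerivAt g (1/(2*Real.sqrt (2*(F x - c))) * (2 * (deriv F x))) x :=
          hs.comp x h1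
        exact (((hasDerivAt_id x).sub hgx).differentiableAt).differentiableWithinAt
      · intro x hx
        rw [interior_Icc] at hx
        have hpos : 0 < 2*(F x - c) := by
          have := hlt x ⟨hx.1, le_of_lt hx.2⟩; linarith
        have hF := (hd x).hasDerivAt
        have h1 : HasDerivAt (fun t => 2*(F t - c)) (2 * (deriv F x)) x :=
          (hF.sub_const c).const_mul 2
        have hs : HasDerivAt Real.sqrt (1/(2*Real.sqrt (2*(F x - c)))) (2*(F x - c)) :=
          hasDerivAt_sqrt (ne_of_gt hpos)
        have hgx : HasDerivAt g (1/(2*Real.sqrt (2*(F x - c))) * (2 * (deriv F x))) x :=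
          hs.comp x h1
        rw [(((hasDerivAt_id x).sub hgx).deriv)]
        have hsq : Real.sqrt ((deriv F x)^2) ≤ Real.sqrt (2*(F x - c)) :=
          Real.sqrt_le_sqrt (hc x ⟨le_trans hap (le_of_lt hx.1), le_trans (le_of_lt hx.2) hqb⟩)
        rw [Real.sqrt_sq_eq_abs] at hsq
        have hds : deriv F x ≤ Real.sqrt (2*(F x - c)) := le_trans (le_abs_self _) hsq
        rw [div_mul_eq_mul_div, one_mul]
        have h2den : (0:ℝ) < 2 * Real.sqrt (2*(F x - c)) := by positivity
        have hkey : (2 * (deriv F x)) ≤ 1 * (2 * Real.sqrt (2*(F x - c))) := by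
          nlinarith [hds]
        have := (div_le_iff₀ h2den).2 hkey
        linarith
    have h' : p - g p ≤ q - g q := hmono (Set.left_mem_Icc.2 hpq) (Set.right_mem_Icc.2 hpq) hpq
    linarith
  by_cases hS : ∃ t ∈ Icc a b, F t = c
  · set S : Set ℝ := Icc a b ∩ F ⁻¹' {c} with hSdef
    have hScl : IsClosed S := isClosed_Icc.inter (isClosed_eq hd.continuous continuous_const)
    have hSne : S.Nonempty := by obtain ⟨t, ht, hft⟩ := hS; exact ⟨t, ht, hft⟩
    have hSbd : BddAbove S := ⟨b, fun t ht => ht.1.2⟩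
    set t1 := sSup S with ht1
    have ht1S : t1 ∈ S := hScl.csSup_mem hSne hSbd
    have ht1ab : t1 ∈ Icc a b := ht1S.1
    have hgt1 : g t1 = 0 := by
      have : F t1 = c := ht1S.2
      simp [hg, this]
    have hlt : ∀ t ∈ Ioc t1 b, c < F t := by
      intro t ht
      rcases lt_or_eq_of_le (hFc t ⟨le_trans ht1ab.1 (le_of_lt ht.1), ht.2⟩) with h | h
      · exact h
      · exfalso
        have : t ∈ S := ⟨⟨le_trans ht1ab.1 (le_of_lt ht.1), ht.2⟩, h.symm⟩
        have := le_csSup hSbd this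
        linarith [ht.1]
    have h1 : g b - g t1 ≤ b - t1 := sub t1 b ht1ab.1 ht1ab.2 le_rfl hlt
    have h2 : 0 ≤ g a := Real.sqrt_nonneg _
    rw [hgt1] at h1
    have : g b ≤ b - t1 := by linarith
    linarith [ht1ab.1]
  · push_neg at hS
    have hlt : ∀ t ∈ Ioc a b, c < F t := by
      intro t ht
      exact lt_of_le_of_ne (hFc t ⟨le_of_lt ht.1, ht.2⟩) (Ne.symm (hS t ⟨le_of_lt ht.1, ht.2⟩))
    exact sub a b le_rfl hab le_rfl hlt


lemma alg_core (s2 A B C E : ℝ) (hs2 : s2^2 = 2) (hs20 : 0 ≤ s2)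
    (hB0 : 0 ≤ B) (hC0 : 0 ≤ C) (hC2 : C^2 = 4 - 2*A^2 + B^2)
    (hE0 : 0 ≤ E) (hE2 : E^2 = 2*A^2 - 2) (hBE : B ≤ E)
    (hAs2 : A ≤ s2) (hA1 : 1 ≤ A) :
    2*s2 - C ≤ 2*A - B := by
  rcases le_or_gt (2*s2 + B - 2*A) 0 with hD | hD
  · linarith [hC0]
  · have h6 : 0 < 6*A - 2*s2 := by nlinarith
    have hsqle : (4*E)^2 ≤ (6*A - 2*s2)^2 := by
      nlinarith [mul_nonneg (sub_nonneg.2 hAs2) (show (0:ℝ) ≤ 5*s2 - A by nlinarith)]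
    have hEkey : 4*E ≤ 6*A - 2*s2 := by
      have h := Real.sqrt_le_sqrt hsqle
      rwa [Real.sqrt_sq (by positivity), Real.sqrt_sq (le_of_lt h6)] at h
    have hfac : C^2 - (2*s2 + B - 2*A)^2 = (s2 - A)*((6*A - 2*s2 - 4*E) + 4*(E - B)) := by
      rw [hC2]; linear_combination (-2 : ℝ) * hs2
    have hCD : (2*s2 + B - 2*A)^2 ≤ C^2 := by
      nlinarith [mul_nonneg (sub_nonneg.2 hAs2) (sub_nonneg.2 hEkey),
        mul_nonneg (sub_nonneg.2 hAs2) (sub_nonneg.2 hBE)]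
    have hfin : 2*s2 + B - 2*A ≤ C := by
      have h := Real.sqrt_le_sqrt hCD
      rwa [Real.sqrt_sq (le_of_lt hD), Real.sqrt_sq hC0] at h
    linarith

lemma alg_lemma (A B : ℝ) (hA0 : 0 ≤ A) (hA2 : A^2 ≤ 2) (hB0 : 0 ≤ B)
    (h1 : 1 ≤ A^2 - B^2/2) :
    2*Real.sqrt 2 - Real.sqrt (2*(2 - (A^2 - B^2/2))) ≤ 2*A - B := by
  have hs2 : (Real.sqrt 2)^2 = 2 := Real.sq_sqrt (by norm_num)
  have hs20 : 0 ≤ Real.sqrt 2 := Real.sqrt_nonneg 2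
  have hargC : 0 ≤ 2*(2 - (A^2 - B^2/2)) := by nlinarith
  have hargE : 0 ≤ 2*A^2 - 2 := by nlinarith [sq_nonneg B]
  have hA1 : 1 ≤ A := by nlinarith [sq_nonneg B]
  have hAs2 : A ≤ Real.sqrt 2 := (Real.le_sqrt hA0 (by norm_num)).2 hA2
  have hBE : B ≤ Real.sqrt (2*A^2 - 2) := by
    have hB2 : B^2 ≤ 2*A^2 - 2 := by nlinarith
    have h := Real.sqrt_le_sqrt hB2
    rwa [Real.sqrt_sq hB0] at h
  exact alg_core (Real.sqrt 2) A B _ _ hs2 hs20 hB0 (Real.sqrt_nonneg _)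
    (by rw [Real.sq_sqrt hargC]; ring) (Real.sqrt_nonneg _) (Real.sq_sqrt hargE)
    hBE hAs2 hA1


lemma side_right_mono (F : ℝ → ℝ) (hd : Differentiable ℝ F) (hb : ∀ t, |F t| ≤ 1)
    (hl : LipschitzWith 1 (deriv F)) {a b : ℝ} (hab : a ≤ b) (ha : deriv F a = 0)
    (hpos : ∀ t ∈ Icc a b, 0 ≤ deriv F t) :
    Real.sqrt (2*(F b - F a)) ≤ b - a ∧
      (1 ≤ F b - F a → 2*Real.sqrt 2 - Real.sqrt (2*(2 - (F b - F a))) ≤ b - a) := by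
  have hen : ∀ t ∈ Icc a b, (deriv F t)^2 ≤ 2*(F t - F a) := by
    intro t ht
    exact energy_right F hd hl ht.1 ha (fun u hu => hpos u ⟨hu.1, le_trans hu.2 ht.2⟩)
  have hmono : ∀ s t, a ≤ s → s ≤ t → t ≤ b → F s ≤ F t := by
    intro s t hs hst htb
    have : ∫ u in s..t, deriv F u = F t - F s := ftc F hd hl s t
    have h0 : 0 ≤ ∫ u in s..t, deriv F u :=
      intervalIntegral.integral_nonneg hst (fun u hu => hpos u ⟨le_trans hs hu.1, le_trans hu.2 htb⟩)
    linarith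
  constructor
  · have h := lip_sqrt_inc F hd hab hen
    have hz : Real.sqrt (2*(F a - F a)) = 0 := by simp
    rw [hz] at h; linarith
  · intro hh
    -- crossover point
    have hub : F b ≤ 1 := (abs_le.1 (hb b)).2
    have hua : -1 ≤ F a := (abs_le.1 (hb a)).1
    have hmem : (F a + 1)/2 ∈ Icc (F a) (F b) := by
      constructor
      · linarith [(abs_le.1 (hb a)).2]
      · linarith
    obtain ⟨τ, hτab, hτ⟩ := intermediate_value_Icc hab (hd.continuous.continuousOn) hmem
    have h1 : Real.sqrt (2*(F τ - F a)) - Real.sqrt (2*(F a - F a)) ≤ τ - a :=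
      lip_sqrt_inc F hd hτab.1 (fun t ht => hen t ⟨ht.1, le_trans ht.2 hτab.2⟩)
    have h2 : Real.sqrt (2*(1 - F τ)) - Real.sqrt (2*(1 - F b)) ≤ b - τ :=
      lip_sqrt_dec F hd hτab.2 (fun t ht => sq_deriv_le_one_sub F hd hb hl t)
    have he1 : 2*(F τ - F a) = 1 - F a := by rw [hτ]; ring
    have he2 : 2*(1 - F τ) = 1 - F a := by rw [hτ]; ring
    rw [he1] at h1; rw [he2] at h2
    have hz : Real.sqrt (2*(F a - F a)) = 0 := by simp
    rw [hz] at h1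
    -- combine : 2 √(1 - F a) - √(2 (1 - F b)) ≤ b - a
    set A := Real.sqrt (1 - F a) with hA
    set B := Real.sqrt (2*(1 - F b)) with hB
    have hsum : 2*A - B ≤ b - a := by linarith
    have hA2 : A^2 = 1 - F a := Real.sq_sqrt (by linarith)
    have hB2 : B^2 = 2*(1 - F b) := Real.sq_sqrt (by linarith)
    have hrel : A^2 - B^2/2 = F b - F a := by rw [hA2, hB2]; ring
    have halg := alg_lemma A B (Real.sqrt_nonneg _) (by rw [hA2]; linarith) (Real.sqrt_nonneg _)
      (by rw [hrel]; exact hh)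
    rw [hrel] at halg
    linarith

lemma side_left_mono (F : ℝ → ℝ) (hd : Differentiable ℝ F) (hb : ∀ t, |F t| ≤ 1)
    (hl : LipschitzWith 1 (deriv F)) {a b : ℝ} (hab : a ≤ b) (hbz : deriv F b = 0)
    (hpos : ∀ t ∈ Icc a b, 0 ≤ deriv F t) :
    Real.sqrt (2*(F b - F a)) ≤ b - a ∧
      (1 ≤ F b - F a → 2*Real.sqrt 2 - Real.sqrt (2*(2 - (F b - F a))) ≤ b - a) := by
  have hen : ∀ t ∈ Icc a b, (deriv F t)^2 ≤ 2*(F b - F t) := by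
    intro t ht
    exact energy_left F hd hl ht.2 hbz (fun u hu => hpos u ⟨le_trans ht.1 hu.1, hu.2⟩)
  constructor
  · have h := lip_sqrt_dec F hd hab hen
    have hz : Real.sqrt (2*(F b - F b)) = 0 := by simp
    rw [hz] at h; linarith
  · intro hh
    have hub : F b ≤ 1 := (abs_le.1 (hb b)).2
    have hua : -1 ≤ F a := (abs_le.1 (hb a)).1
    have hFa0 : F a ≤ 0 := by linarith
    have hmem : (F b - 1)/2 ∈ Icc (F a) (F b) := by
      constructor
      · linarith
      · linarith [(abs_le.1 (hb b)).1]
    obtain ⟨τ, hτab, hτ⟩ := intermediate_value_Icc hab (hd.continuous.continuousOn) hmem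
    have h1 : Real.sqrt (2*(F τ - (-1))) - Real.sqrt (2*(F a - (-1))) ≤ τ - a :=
      lip_sqrt_inc F hd hτab.1 (fun t ht => by
        have := sq_deriv_le_one_add F hd hb hl t
        nlinarith [this])
    have h2 : Real.sqrt (2*(F b - F τ)) - Real.sqrt (2*(F b - F b)) ≤ b - τ :=
      lip_sqrt_dec F hd hτab.2 (fun t ht => hen t ⟨le_trans hτab.1 ht.1, ht.2⟩)
    have he1 : 2*(F τ - (-1)) = 1 + F b := by rw [hτ]; ring
    have he2 : 2*(F b - F τ) = 1 + F b := by rw [hτ]; ring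
    rw [he1] at h1; rw [he2] at h2
    have hz : Real.sqrt (2*(F b - F b)) = 0 := by simp
    rw [hz] at h2
    set A := Real.sqrt (1 + F b) with hA
    set B := Real.sqrt (2*(F a - (-1))) with hB
    have hsum : 2*A - B ≤ b - a := by linarith
    have hA2 : A^2 = 1 + F b := Real.sq_sqrt (by linarith)
    have hB2 : B^2 = 2*(1 + F a) := by rw [hB]; rw [show 2*(F a - (-1)) = 2*(1 + F a) by ring]; exact Real.sq_sqrt (by linarith)
    have hrel : A^2 - B^2/2 = F b - F a := by rw [hA2, hB2]; ring
    have halg := alg_lemma A B (Real.sqrt_nonneg _) (by rw [hA2]; linarith) (Real.sqrt_nonneg _)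
      (by rw [hrel]; exact hh)
    rw [hrel] at halg
    linarith

lemma side_right_core (F : ℝ → ℝ) (hd : Differentiable ℝ F) (hb : ∀ t, |F t| ≤ 1)
    (hl : LipschitzWith 1 (deriv F)) {a b : ℝ} (hab : a ≤ b) (ha : deriv F a = 0)
    (hpos : ∀ t ∈ Icc a b, 0 ≤ deriv F t) :
    (∫ t in a..b, |deriv F t|) ≤ 2 ∧
    Real.sqrt (2*(∫ t in a..b, |deriv F t|)) ≤ b - a ∧
    (1 ≤ (∫ t in a..b, |deriv F t|) →
      2*Real.sqrt 2 - Real.sqrt (2*(2 - (∫ t in a..b, |deriv F t|))) ≤ b - a) := by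
  have hIeq : (∫ t in a..b, |deriv F t|) = F b - F a := by
    rw [intervalIntegral.integral_congr (g := deriv F)
      (fun t ht => abs_of_nonneg (hpos t (by rwa [Set.uIcc_of_le hab] at ht)))]
    exact ftc F hd hl a b
  obtain ⟨p2, p3⟩ := side_right_mono F hd hb hl hab ha hpos
  rw [hIeq]
  exact ⟨by linarith [(abs_le.1 (hb a)).1, (abs_le.1 (hb b)).2], p2, p3⟩

lemma side_left_core (F : ℝ → ℝ) (hd : Differentiable ℝ F) (hb : ∀ t, |F t| ≤ 1)
    (hl : LipschitzWith 1 (deriv F)) {a b : ℝ} (hab : a ≤ b) (hbz : deriv F b = 0)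
    (hpos : ∀ t ∈ Icc a b, 0 ≤ deriv F t) :
    (∫ t in a..b, |deriv F t|) ≤ 2 ∧
    Real.sqrt (2*(∫ t in a..b, |deriv F t|)) ≤ b - a ∧
    (1 ≤ (∫ t in a..b, |deriv F t|) →
      2*Real.sqrt 2 - Real.sqrt (2*(2 - (∫ t in a..b, |deriv F t|))) ≤ b - a) := by
  have hIeq : (∫ t in a..b, |deriv F t|) = F b - F a := by
    rw [intervalIntegral.integral_congr (g := deriv F)
      (fun t ht => abs_of_nonneg (hpos t (by rwa [Set.uIcc_of_le hab] at ht)))]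
    exact ftc F hd hl a b
  obtain ⟨p2, p3⟩ := side_left_mono F hd hb hl hab hbz hpos
  rw [hIeq]
  exact ⟨by linarith [(abs_le.1 (hb a)).1, (abs_le.1 (hb b)).2], p2, p3⟩

lemma neg_hb (F : ℝ → ℝ) (hb : ∀ t, |F t| ≤ 1) : ∀ t, |(fun s => -F s) t| ≤ 1 := by
  intro t; simpa [abs_neg] using hb t

lemma side_right (F : ℝ → ℝ) (hd : Differentiable ℝ F) (hb : ∀ t, |F t| ≤ 1)
    (hl : LipschitzWith 1 (deriv F)) {a b : ℝ} (hab : a ≤ b) (ha : deriv F a = 0)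
    (hsgn : (∀ t ∈ Icc a b, 0 ≤ deriv F t) ∨ (∀ t ∈ Icc a b, deriv F t ≤ 0)) :
    (∫ t in a..b, |deriv F t|) ≤ 2 ∧
    Real.sqrt (2*(∫ t in a..b, |deriv F t|)) ≤ b - a ∧
    (1 ≤ (∫ t in a..b, |deriv F t|) →
      2*Real.sqrt 2 - Real.sqrt (2*(2 - (∫ t in a..b, |deriv F t|))) ≤ b - a) := by
  rcases hsgn with hpos | hneg
  · exact side_right_core F hd hb hl hab ha hpos
  · have haG : deriv (fun s => -F s) a = 0 := by rw [deriv_neg_eq]; simp [ha]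
    have hposG : ∀ t ∈ Icc a b, 0 ≤ deriv (fun s => -F s) t := by
      intro t ht; rw [deriv_neg_eq]; simp; linarith [hneg t ht]
    have hcore := side_right_core (fun s => -F s) hd.neg (neg_hb F hb) (lip_neg F hl)
      hab haG hposG
    have hIeq : (∫ t in a..b, |deriv (fun s => -F s) t|) = ∫ t in a..b, |deriv F t| := by
      apply intervalIntegral.integral_congr
      intro t ht; rw [deriv_neg_eq]; simp
    rwa [hIeq] at hcore

lemma side_left (F : ℝ → ℝ) (hd : Differentiable ℝ F) (hb : ∀ t, |F t| ≤ 1)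
    (hl : LipschitzWith 1 (deriv F)) {a b : ℝ} (hab : a ≤ b) (hbz : deriv F b = 0)
    (hsgn : (∀ t ∈ Icc a b, 0 ≤ deriv F t) ∨ (∀ t ∈ Icc a b, deriv F t ≤ 0)) :
    (∫ t in a..b, |deriv F t|) ≤ 2 ∧
    Real.sqrt (2*(∫ t in a..b, |deriv F t|)) ≤ b - a ∧
    (1 ≤ (∫ t in a..b, |deriv F t|) →
      2*Real.sqrt 2 - Real.sqrt (2*(2 - (∫ t in a..b, |deriv F t|))) ≤ b - a) := by
  rcases hsgn with hpos | hneg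
  · exact side_left_core F hd hb hl hab hbz hpos
  · have hbG : deriv (fun s => -F s) b = 0 := by rw [deriv_neg_eq]; simp [hbz]
    have hposG : ∀ t ∈ Icc a b, 0 ≤ deriv (fun s => -F s) t := by
      intro t ht; rw [deriv_neg_eq]; simp; linarith [hneg t ht]
    have hcore := side_left_core (fun s => -F s) hd.neg (neg_hb F hb) (lip_neg F hl)
      hab hbG hposG
    have hIeq : (∫ t in a..b, |deriv (fun s => -F s) t|) = ∫ t in a..b, |deriv F t| := by
      apply intervalIntegral.integral_congr
      intro t ht; rw [deriv_neg_eq]; simp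
    rwa [hIeq] at hcore

lemma middle_bound (F : ℝ → ℝ) (hl : LipschitzWith 1 (deriv F)) {a b : ℝ}
    (hab : a ≤ b) (ha : deriv F a = 0) (hbz : deriv F b = 0) :
    (∫ t in a..b, |deriv F t|) ≤ (b-a)^2/4 := by
  set M := (a+b)/2 with hM
  have haM : a ≤ M := by rw [hM]; linarith
  have hMb : M ≤ b := by rw [hM]; linarith
  have habs : Continuous (fun t => |deriv F t|) := hl.continuous.abs
  have hsplit : (∫ t in a..b, |deriv F t|)
      = (∫ t in a..M, |deriv F t|) + ∫ t in M..b, |deriv F t| :=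
    (integral_add_adjacent_intervals (habs.intervalIntegrable _ _)
      (habs.intervalIntegrable _ _)).symm
  have h1 : (∫ t in a..M, |deriv F t|) ≤ ∫ t in a..M, (t - a) := by
    apply integral_mono_on haM (habs.intervalIntegrable _ _)
      (by apply Continuous.intervalIntegrable; continuity)
    intro t ht
    have := lip_abs F hl t a
    rw [ha, sub_zero] at this
    calc |deriv F t| ≤ |t - a| := this
    _ = t - a := abs_of_nonneg (by linarith [ht.1])
  have h2 : (∫ t in M..b, |deriv F t|) ≤ ∫ t in M..b, (b - t) := by
    apply integral_mono_on hMb (habs.intervalIntegrable _ _)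
      (by apply Continuous.intervalIntegrable; continuity)
    intro t ht
    have := lip_abs F hl t b
    rw [hbz, sub_zero] at this
    calc |deriv F t| ≤ |t - b| := this
    _ = b - t := by rw [abs_sub_comm]; exact abs_of_nonneg (by linarith [ht.2])
  have e1 : (∫ t in a..M, (t - a)) = (M - a)^2/2 := by
    rw [show (fun t => t - a) = fun t : ℝ => t - a from rfl]
    rw [intervalIntegral.integral_sub (by apply Continuous.intervalIntegrable; continuity)
      (by apply Continuous.intervalIntegrable; continuity)]
    rw [integral_id, intervalIntegral.integral_const]
    simp [smul_eq_mul]; ring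
  have e2 : (∫ t in M..b, (b - t)) = (b - M)^2/2 := by
    rw [show (fun t => b - t) = fun t : ℝ => b - t from rfl]
    rw [intervalIntegral.integral_sub (by apply Continuous.intervalIntegrable; continuity)
      (by apply Continuous.intervalIntegrable; continuity)]
    rw [integral_id, intervalIntegral.integral_const]
    simp [smul_eq_mul]; ring
  have : M - a = (b-a)/2 := by rw [hM]; ring
  have : b - M = (b-a)/2 := by rw [hM]; ring
  nlinarith [h1, h2, e1, e2]

lemma sign_dichotomy (F : ℝ → ℝ) (hl : LipschitzWith 1 (deriv F)) (s : Set ℝ)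
    (hs : s.OrdConnected) (hno : ∀ t ∈ s, deriv F t ≠ 0) :
    (∀ t ∈ s, 0 ≤ deriv F t) ∨ (∀ t ∈ s, deriv F t ≤ 0) := by
  by_contra hcon
  push_neg at hcon
  obtain ⟨⟨x, hx, hxneg⟩, ⟨y, hy, hypos⟩⟩ := hcon
  have h0 : (0:ℝ) ∈ uIcc (deriv F x) (deriv F y) := by
    rw [Set.mem_uIcc]; left; constructor <;> linarith
  obtain ⟨z, hz, hz0⟩ := intermediate_value_uIcc (hl.continuous.continuousOn) h0
  exact hno z (hs.uIcc_subset hx hy hz) hz0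

lemma case_big (s2 a b hL hR y c : ℝ) (hs2 : s2^2 = 2) (hs20 : 0 ≤ s2)
    (hy0 : 0 ≤ y) (hy2 : y^2 = 2*hR)
    (hc0 : 0 ≤ c) (hc2 : c^2 = 2*(2-hL))
    (hab : a ≤ b)
    (hPR : y ≤ s2 - b)
    (hQL : 2*s2 - c ≤ a + s2) :
    hL + (b-a)^2/4 + hR ≤ 2 := by
  set l := s2 - b with hldef
  have hl0 : 0 ≤ l := le_trans hy0 hPR
  have hba : b - a ≤ c - l := by rw [hldef]; linarith
  have hba0 : 0 ≤ b - a := by linarith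
  have hlc : l ≤ c := by linarith
  have hsq : (b-a)^2 ≤ (c-l)^2 := pow_le_pow_left₀ hba0 hba 2
  have hRl : hR ≤ l^2/2 := by nlinarith [pow_le_pow_left₀ hy0 hPR 2]
  have hLc : hL = 2 - c^2/2 := by linarith [hc2]
  nlinarith [mul_nonneg (show (0:ℝ) ≤ 3*l + c by linarith) (sub_nonneg.2 hlc)]

lemma assembly (s2 a b hL hR x y c e : ℝ) (hs2 : s2^2 = 2) (hs20 : 0 ≤ s2)
    (hL0 : 0 ≤ hL) (hR0 : 0 ≤ hR)
    (hx0 : 0 ≤ x) (hx2 : x^2 = 2*hL) (hy0 : 0 ≤ y) (hy2 : y^2 = 2*hR)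
    (hc0 : 0 ≤ c) (hc2 : c^2 = 2*(2-hL)) (he0 : 0 ≤ e) (he2 : e^2 = 2*(2-hR))
    (hab : a ≤ b)
    (hPL : x ≤ a + s2) (hPR : y ≤ s2 - b)
    (hQL : 1 ≤ hL → 2*s2 - c ≤ a + s2)
    (hQR : 1 ≤ hR → 2*s2 - e ≤ s2 - b) :
    hL + (b-a)^2/4 + hR ≤ 2 := by
  rcases le_or_gt hL 1 with h1 | h1
  · rcases le_or_gt hR 1 with h2 | h2
    · -- both small
      have hxs : x ≤ s2 := by nlinarith
      have hys : y ≤ s2 := by nlinarith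
      have hba : b - a ≤ 2*s2 - x - y := by linarith
      have hba0 : 0 ≤ b - a := by linarith
      have hsq : (b-a)^2 ≤ (2*s2 - x - y)^2 := pow_le_pow_left₀ hba0 hba 2
      nlinarith [mul_nonneg hx0 (sub_nonneg.2 hxs), mul_nonneg hy0 (sub_nonneg.2 hys),
        mul_nonneg hx0 (sub_nonneg.2 hys), mul_nonneg hy0 (sub_nonneg.2 hxs)]
    · -- hR big : mirror via (a,b) ↦ (-b,-a), (L ↔ R)
      have := case_big s2 (-b) (-a) hR hL x e hs2 hs20 hx0 hx2 he0 he2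
        (by linarith) (by linarith) (by linarith [hQR (le_of_lt h2)])
      calc hL + (b-a)^2/4 + hR = hR + (-a - -b)^2/4 + hL := by ring
      _ ≤ 2 := this
  · exact case_big s2 a b hL hR y c hs2 hs20 hy0 hy2 hc0 hc2 hab hPR (hQL (le_of_lt h1))

/-- If `f : ℝ → ℝ` is differentiable, `|f| ≤ 1`, `f'` is Lipschitz of
constant `1` and compactly supported, then `∫_{-√2}^{√2} |f'(t)| dt ≤ 2`. -/
theorem variation_bound_compact_support (f : ℝ → ℝ)
    (hdiff : Differentiable ℝ f) (hbound : ∀ t : ℝ, |f t| ≤ 1)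
    (hlip : LipschitzWith 1 (deriv f)) (hsupp : HasCompactSupport (deriv f)) :
    (∫ t in (-Real.sqrt 2)..(Real.sqrt 2), |deriv f t|) ≤ 2 := by
  have hs2 : (Real.sqrt 2)^2 = 2 := Real.sq_sqrt (by norm_num)
  have hs20 : (0:ℝ) ≤ Real.sqrt 2 := Real.sqrt_nonneg 2
  set s2 := Real.sqrt 2 with hs2def
  have hss : -s2 ≤ s2 := by linarith
  have habs : Continuous (fun t => |deriv f t|) := hlip.continuous.abs
  by_cases hZ : (Icc (-s2) s2 ∩ deriv f ⁻¹' {0}).Nonempty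
  · set Z := Icc (-s2) s2 ∩ deriv f ⁻¹' {0} with hZdef
    have hZcl : IsClosed Z := isClosed_Icc.inter (isClosed_eq hlip.continuous continuous_const)
    have hbddb : BddBelow Z := ⟨-s2, fun t ht => ht.1.1⟩
    have hbdda : BddAbove Z := ⟨s2, fun t ht => ht.1.2⟩
    set α := sInf Z with hαdef
    set β := sSup Z with hβdef
    have hαZ : α ∈ Z := hZcl.csInf_mem hZ hbddb
    have hβZ : β ∈ Z := hZcl.csSup_mem hZ hbdda
    have hαβ : α ≤ β := csInf_le_csSup hZ hbddb hbdda
    have hα : deriv f α = 0 := hαZ.2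
    have hβ : deriv f β = 0 := hβZ.2
    have hsplit : (∫ t in (-s2)..s2, |deriv f t|)
        = ((∫ t in (-s2)..α, |deriv f t|) + (∫ t in α..β, |deriv f t|))
          + (∫ t in β..s2, |deriv f t|) := by
      rw [integral_add_adjacent_intervals (habs.intervalIntegrable _ _)
        (habs.intervalIntegrable _ _),
        integral_add_adjacent_intervals (habs.intervalIntegrable _ _)
        (habs.intervalIntegrable _ _)]
    have hnoL : ∀ t ∈ Ico (-s2) α, deriv f t ≠ 0 := by
      intro t ht h0
      have htZ : t ∈ Z := ⟨⟨ht.1, le_trans (le_of_lt ht.2) hαZ.1.2⟩, h0⟩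
      linarith [csInf_le hbddb htZ, ht.2]
    have hnoR : ∀ t ∈ Ioc β s2, deriv f t ≠ 0 := by
      intro t ht h0
      have htZ : t ∈ Z := ⟨⟨le_trans hβZ.1.1 (le_of_lt ht.1), ht.2⟩, h0⟩
      linarith [le_csSup hbdda htZ, ht.1]
    have hsgnL : (∀ t ∈ Icc (-s2) α, 0 ≤ deriv f t) ∨ (∀ t ∈ Icc (-s2) α, deriv f t ≤ 0) := by
      rcases sign_dichotomy f hlip _ Set.ordConnected_Ico hnoL with hp | hn
      · left; intro t ht
        rcases lt_or_eq_of_le ht.2 with h | h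
        · exact hp t ⟨ht.1, h⟩
        · rw [h, hα]
      · right; intro t ht
        rcases lt_or_eq_of_le ht.2 with h | h
        · exact hn t ⟨ht.1, h⟩
        · rw [h, hα]
    have hsgnR : (∀ t ∈ Icc β s2, 0 ≤ deriv f t) ∨ (∀ t ∈ Icc β s2, deriv f t ≤ 0) := by
      rcases sign_dichotomy f hlip _ Set.ordConnected_Ioc hnoR with hp | hn
      · left; intro t ht
        rcases lt_or_eq_of_le ht.1 with h | h
        · exact hp t ⟨h, ht.2⟩
        · rw [← h, hβ]
      · right; intro t ht
        rcases lt_or_eq_of_le ht.1 with h | h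
        · exact hn t ⟨h, ht.2⟩
        · rw [← h, hβ]
    obtain ⟨hL2, hLx, hLq⟩ := side_left f hdiff hbound hlip hαZ.1.1 hα hsgnL
    obtain ⟨hR2, hRx, hRq⟩ := side_right f hdiff hbound hlip hβZ.1.2 hβ hsgnR
    have hmid := middle_bound f hlip hαβ hα hβ
    have hL0 : 0 ≤ ∫ t in (-s2)..α, |deriv f t| :=
      intervalIntegral.integral_nonneg hαZ.1.1 (fun u _ => abs_nonneg _)
    have hR0 : 0 ≤ ∫ t in β..s2, |deriv f t| :=
      intervalIntegral.integral_nonneg hβZ.1.2 (fun u _ => abs_nonneg _)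
    have hasm := assembly s2 α β (∫ t in (-s2)..α, |deriv f t|) (∫ t in β..s2, |deriv f t|)
      (Real.sqrt (2*(∫ t in (-s2)..α, |deriv f t|)))
      (Real.sqrt (2*(∫ t in β..s2, |deriv f t|)))
      (Real.sqrt (2*(2-(∫ t in (-s2)..α, |deriv f t|))))
      (Real.sqrt (2*(2-(∫ t in β..s2, |deriv f t|))))
      hs2 hs20 hL0 hR0
      (Real.sqrt_nonneg _) (Real.sq_sqrt (by linarith))
      (Real.sqrt_nonneg _) (Real.sq_sqrt (by linarith))
      (Real.sqrt_nonneg _) (Real.sq_sqrt (by linarith))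
      (Real.sqrt_nonneg _) (Real.sq_sqrt (by linarith))
      hαβ (by linarith [hLx]) (by linarith [hRx])
      (fun h => by linarith [hLq h]) (fun h => by linarith [hRq h])
    linarith [hsplit, hmid, hasm]
  · have hno : ∀ t ∈ Icc (-s2) s2, deriv f t ≠ 0 := by
      intro t ht h0; exact hZ ⟨t, ht, h0⟩
    rcases sign_dichotomy f hlip _ Set.ordConnected_Icc hno with hp | hn
    · rw [intervalIntegral.integral_congr (g := deriv f)
        (fun t ht => abs_of_nonneg (hp t (by rwa [Set.uIcc_of_le hss] at ht))),
        ftc f hdiff hlip]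
      linarith [(abs_le.1 (hbound s2)).2, (abs_le.1 (hbound (-s2))).1]
    · rw [intervalIntegral.integral_congr (g := fun t => -deriv f t)
        (fun t ht => abs_of_nonpos (hn t (by rwa [Set.uIcc_of_le hss] at ht))),
        intervalIntegral.integral_neg, ftc f hdiff hlip]
      linarith [(abs_le.1 (hbound s2)).1, (abs_le.1 (hbound (-s2))).2]
end

section
/- For every real $T > 0$, $T/\sqrt 2 \le \sigma_1(T) \le T/\sqrt 2 + 5$, where $\sigma_1(T) = \sup_{f \in \mathcal{L}_2(T)} \int_0^T |f'(t)|\, dt$. -/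
open Set MeasureTheory intervalIntegral Real

noncomputable def rt : ℝ := Real.sqrt 2

lemma rt_pos : 0 < rt := Real.sqrt_pos.mpr (by norm_num)
lemma rt_sq : rt ^ 2 = 2 := Real.sq_sqrt (by norm_num)

/-- distance to the lattice (4rt)ℤ -/
noncomputable def dd (x : ℝ) : ℝ := |x - 4 * rt * (round (x / (4 * rt)) : ℤ)|

lemma dd_le_2rt (x : ℝ) : dd x ≤ 2 * rt := by
  have h4 : (0:ℝ) < 4 * rt := by nlinarith [rt_pos]
  have h := abs_sub_round (x / (4 * rt))
  have heq : x - 4 * rt * (round (x / (4 * rt)) : ℤ) = 4 * rt * (x / (4*rt) - (round (x / (4 * rt)) : ℤ)) := by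
    rw [mul_sub, mul_comm (4*rt) (x / (4*rt)), div_mul_cancel₀ x h4.ne']
  have : |x - 4 * rt * (round (x / (4 * rt)) : ℤ)| = 4 * rt * |x / (4*rt) - (round (x / (4 * rt)) : ℤ)| := by
    rw [heq, abs_mul, abs_of_pos h4]
  rw [dd, this]
  nlinarith [rt_pos]

lemma dd_le (x : ℝ) (k : ℤ) : dd x ≤ |x - 4 * rt * k| := by
  set m : ℤ := round (x / (4 * rt)) with hm
  rcases eq_or_ne k m with rfl | hne
  · exact le_of_eq rfl
  · have h1 : dd x ≤ 2 * rt := dd_le_2rt x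
    have hk : (1:ℝ) ≤ |(k:ℝ) - m| := by
      have : k - m ≠ 0 := sub_ne_zero.mpr hne
      have : (1:ℤ) ≤ |k - m| := Int.one_le_abs this
      calc (1:ℝ) = ((1:ℤ):ℝ) := by norm_num
        _ ≤ ((|k - m| : ℤ) : ℝ) := by exact_mod_cast this
        _ = |(k:ℝ) - m| := by push_cast [Int.cast_abs]; ring_nf
    have h2 : 4 * rt ≤ |4 * rt * (k:ℝ) - 4 * rt * m| := by
      rw [← mul_sub, abs_mul, abs_of_pos (by nlinarith [rt_pos] : (0:ℝ) < 4*rt)]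
      nlinarith [rt_pos]
    have h3 : |4 * rt * (k:ℝ) - 4 * rt * m| ≤ |x - 4*rt*k| + |x - 4*rt*m| := by
      have := abs_sub (x - 4*rt*k) (x - 4*rt*m)
      calc |4 * rt * (k:ℝ) - 4 * rt * m| = |(x - 4*rt*m) - (x - 4*rt*k)| := by ring_nf
        _ ≤ |x - 4*rt*m| + |x - 4*rt*k| := abs_sub _ _
        _ = |x - 4*rt*k| + |x - 4*rt*m| := by ring
    have hdd : dd x = |x - 4*rt*m| := rfl
    nlinarith [rt_pos]

lemma dd_eval (x : ℝ) (k : ℤ) (h : |x - 4 * rt * k| ≤ 2 * rt) : dd x = |x - 4 * rt * k| := by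
  refine le_antisymm (dd_le x k) ?_
  set m : ℤ := round (x / (4 * rt)) with hm
  rcases eq_or_ne k m with rfl | hne
  · exact le_of_eq rfl
  · have hk : (1:ℝ) ≤ |(k:ℝ) - m| := by
      have : k - m ≠ 0 := sub_ne_zero.mpr hne
      have : (1:ℤ) ≤ |k - m| := Int.one_le_abs this
      calc (1:ℝ) = ((1:ℤ):ℝ) := by norm_num
        _ ≤ ((|k - m| : ℤ) : ℝ) := by exact_mod_cast this
        _ = |(k:ℝ) - m| := by push_cast [Int.cast_abs]; ring_nf
    have h2 : 4 * rt ≤ |4 * rt * (k:ℝ) - 4 * rt * m| := by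
      rw [← mul_sub, abs_mul, abs_of_pos (by nlinarith [rt_pos] : (0:ℝ) < 4*rt)]
      nlinarith [rt_pos]
    have h3 : |4 * rt * (k:ℝ) - 4 * rt * m| ≤ |x - 4*rt*k| + |x - 4*rt*m| := by
      calc |4 * rt * (k:ℝ) - 4 * rt * m| = |(x - 4*rt*m) - (x - 4*rt*k)| := by ring_nf
        _ ≤ |x - 4*rt*m| + |x - 4*rt*k| := abs_sub _ _
        _ = |x - 4*rt*k| + |x - 4*rt*m| := by ring
    have hdd : dd x = |x - 4*rt*m| := rfl
    rw [hdd]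
    nlinarith [rt_pos]

lemma dd_lip (x y : ℝ) : |dd x - dd y| ≤ |x - y| := by
  have h1 : dd x ≤ dd y + |x - y| := by
    have := dd_le x (round (y / (4 * rt)))
    have h2 : |x - 4 * rt * (round (y / (4*rt)) : ℤ)| ≤ |y - 4 * rt * (round (y / (4*rt)) : ℤ)| + |x - y| := by
      calc |x - 4 * rt * (round (y / (4*rt)) : ℤ)| = |(y - 4 * rt * (round (y / (4*rt)) : ℤ)) + (x - y)| := by ring_nf
        _ ≤ _ := abs_add_le _ _
    have hdy : dd y = |y - 4 * rt * (round (y / (4*rt)) : ℤ)| := rfl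
    linarith
  have h2 : dd y ≤ dd x + |x - y| := by
    have := dd_le y (round (x / (4 * rt)))
    have h2 : |y - 4 * rt * (round (x / (4*rt)) : ℤ)| ≤ |x - 4 * rt * (round (x / (4*rt)) : ℤ)| + |x - y| := by
      calc |y - 4 * rt * (round (x / (4*rt)) : ℤ)| = |(x - 4 * rt * (round (x / (4*rt)) : ℤ)) + -(x - y)| := by ring_nf
        _ ≤ |x - 4 * rt * (round (x / (4*rt)) : ℤ)| + |-(x-y)| := abs_add_le _ _
        _ = |x - 4 * rt * (round (x / (4*rt)) : ℤ)| + |x - y| := by rw [abs_neg]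
    have hdx : dd x = |x - 4 * rt * (round (x / (4*rt)) : ℤ)| := rfl
    linarith
  rw [abs_sub_le_iff]
  constructor <;> linarith

lemma dd_per (x : ℝ) : dd (x + 4 * rt) = dd x := by
  have h4 : (4 * rt) ≠ 0 := by nlinarith [rt_pos]
  have : (x + 4 * rt) / (4 * rt) = x / (4 * rt) + 1 := by rw [add_div, div_self h4]
  rw [dd, this, round_add_one]
  push_cast
  rw [dd]
  congr 1
  ring
/-- the extremal wave's derivative -/
noncomputable def ww (t : ℝ) : ℝ := rt - dd (t - rt / 2)

lemma ww_per : Function.Periodic ww (4 * rt) := by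
  intro t
  unfold ww
  rw [show t + 4 * rt - rt / 2 = (t - rt / 2) + 4 * rt by ring, dd_per]

lemma ww_lip : LipschitzWith 1 ww := by
  apply LipschitzWith.of_dist_le_mul
  intro x y
  rw [Real.dist_eq, Real.dist_eq, NNReal.coe_one, one_mul]
  unfold ww
  have := dd_lip (x - rt/2) (y - rt/2)
  rw [show x - rt/2 - (y - rt/2) = x - y by ring] at this
  calc |rt - dd (x - rt/2) - (rt - dd (y - rt/2))| = |dd (y - rt/2) - dd (x - rt/2)| := by ring_nf
    _ = |dd (x - rt/2) - dd (y - rt/2)| := abs_sub_comm _ _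
    _ ≤ |x - y| := this

lemma ww_cont : Continuous ww := ww_lip.continuous

lemma ww_eval1 (t : ℝ) (h1 : -(3 * rt / 2) ≤ t) (h2 : t ≤ 5 * rt / 2) :
    ww t = rt - |t - rt / 2| := by
  unfold ww
  congr 1
  have h := dd_eval (t - rt / 2) 0 (by
    push_cast
    rw [mul_zero, sub_zero, abs_le]
    constructor <;> nlinarith [rt_pos])
  rw [h]
  push_cast
  rw [mul_zero, sub_zero]

lemma ww_eval2 (t : ℝ) (h1 : 5 * rt / 2 ≤ t) (h2 : t ≤ 4 * rt) :
    ww t = t - 7 * rt / 2 := by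
  unfold ww
  have h := dd_eval (t - rt / 2) 1 (by
    push_cast
    rw [mul_one, abs_le]
    constructor <;> nlinarith [rt_pos])
  rw [h]
  push_cast
  rw [mul_one]
  rw [abs_of_nonpos (by nlinarith [rt_pos])]
  ring

lemma int_lin (a b p q : ℝ) : ∫ s in a..b, (p + q * s) = p * (b - a) + q * (b ^ 2 - a ^ 2) / 2 := by
  have h : ∀ s ∈ uIcc a b, HasDerivAt (fun x => p * x + q * x ^ 2 / 2) (p + q * s) s := by
    intro s _
    have h1 : HasDerivAt (fun x : ℝ => p * x) p s := by simpa using (hasDerivAt_id s).const_mul p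
    have h2 : HasDerivAt (fun x : ℝ => x ^ 2) (2 * s) s := by simpa using hasDerivAt_pow 2 s
    have h3 : HasDerivAt (fun x : ℝ => q * x ^ 2 / 2) (q * (2 * s) / 2) s :=
      (h2.const_mul q).div_const 2
    have : HasDerivAt (fun x => p * x + q * x ^ 2 / 2) (p + q * (2 * s) / 2) s := h1.add h3
    convert this using 1
    ring
  rw [integral_eq_sub_of_hasDerivAt h (((continuous_const.add
    (continuous_const.mul continuous_id'))).intervalIntegrable a b)]
  ring

lemma int_piece (u v p q : ℝ) (f : ℝ → ℝ) (huv : u ≤ v) (h : ∀ s ∈ Icc u v, f s = p + q * s) :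
    ∫ s in u..v, f s = p * (v - u) + q * (v ^ 2 - u ^ 2) / 2 := by
  rw [intervalIntegral.integral_congr (g := fun s => p + q * s) ?_, int_lin]
  intro s hs
  rw [uIcc_of_le huv] at hs
  exact h s hs

lemma int_split (a b c₀ : ℝ) (f : ℝ → ℝ) (hf : Continuous f) :
    ∫ s in a..c₀, f s = (∫ s in a..b, f s) + ∫ s in b..c₀, f s :=
  (integral_add_adjacent_intervals (hf.intervalIntegrable _ _) (hf.intervalIntegrable _ _)).symm

-- piecewise formulas for ww and |ww|
lemma wp1 : ∀ s ∈ Icc (0:ℝ) (rt/2), ww s = rt/2 + 1 * s := by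
  intro s hs
  obtain ⟨h1, h2⟩ := hs
  rw [ww_eval1 s (by nlinarith [rt_pos]) (by nlinarith [rt_pos]),
    abs_of_nonpos (by nlinarith [rt_pos])]
  ring

lemma wp2 : ∀ s ∈ Icc (rt/2) (5*rt/2), ww s = 3*rt/2 + (-1) * s := by
  intro s hs
  obtain ⟨h1, h2⟩ := hs
  rw [ww_eval1 s (by nlinarith [rt_pos]) (by nlinarith [rt_pos]),
    abs_of_nonneg (by nlinarith [rt_pos])]
  ring

lemma wp3 : ∀ s ∈ Icc (5*rt/2) (4*rt), ww s = -(7*rt/2) + 1 * s := by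
  intro s hs
  obtain ⟨h1, h2⟩ := hs
  rw [ww_eval2 s h1 h2]
  ring

lemma aq1 : ∀ s ∈ Icc (0:ℝ) (rt/2), |ww s| = rt/2 + 1 * s := by
  intro s hs
  rw [wp1 s hs]
  obtain ⟨h1, h2⟩ := hs
  rw [abs_of_nonneg (by nlinarith [rt_pos])]

lemma aq2 : ∀ s ∈ Icc (rt/2) (3*rt/2), |ww s| = 3*rt/2 + (-1) * s := by
  intro s hs
  obtain ⟨h1, h2⟩ := hs
  rw [wp2 s ⟨h1, by nlinarith [rt_pos]⟩]
  rw [abs_of_nonneg (by nlinarith [rt_pos])]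

lemma aq3 : ∀ s ∈ Icc (3*rt/2) (5*rt/2), |ww s| = -(3*rt/2) + 1 * s := by
  intro s hs
  obtain ⟨h1, h2⟩ := hs
  rw [wp2 s ⟨by nlinarith [rt_pos], h2⟩]
  rw [abs_of_nonpos (by nlinarith [rt_pos])]
  ring

lemma aq4 : ∀ s ∈ Icc (5*rt/2) (7*rt/2), |ww s| = 7*rt/2 + (-1) * s := by
  intro s hs
  obtain ⟨h1, h2⟩ := hs
  rw [wp3 s ⟨h1, by nlinarith [rt_pos]⟩]
  rw [abs_of_nonpos (by nlinarith [rt_pos])]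
  ring

lemma aq5 : ∀ s ∈ Icc (7*rt/2) (4*rt), |ww s| = -(7*rt/2) + 1 * s := by
  intro s hs
  obtain ⟨h1, h2⟩ := hs
  rw [wp3 s ⟨by nlinarith [rt_pos], h2⟩]
  rw [abs_of_nonneg (by nlinarith [rt_pos])]
noncomputable def FF (t : ℝ) : ℝ := ∫ s in (0:ℝ)..t, ww s
noncomputable def AA (t : ℝ) : ℝ := ∫ s in (0:ℝ)..t, |ww s|

lemma aww_cont : Continuous fun s => |ww s| := ww_cont.abs

lemma FF_eval1 (t : ℝ) (h1 : 0 ≤ t) (h2 : t ≤ rt/2) : FF t = rt*t/2 + t^2/2 := by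
  rw [FF, int_piece 0 t (rt/2) 1 ww h1 (fun s hs => wp1 s ⟨hs.1, le_trans hs.2 h2⟩)]
  ring

lemma FF_eval2 (t : ℝ) (h1 : rt/2 ≤ t) (h2 : t ≤ 5*rt/2) :
    FF t = -1/2 + 3*rt*t/2 - t^2/2 := by
  rw [FF, int_split 0 (rt/2) t ww ww_cont,
    int_piece 0 (rt/2) (rt/2) 1 ww (by nlinarith [rt_pos]) wp1,
    int_piece (rt/2) t (3*rt/2) (-1) ww h1 (fun s hs => wp2 s ⟨hs.1, le_trans hs.2 h2⟩)]
  linear_combination (-1/4 : ℝ) * rt_sq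

lemma FF_eval3 (t : ℝ) (h1 : 5*rt/2 ≤ t) (h2 : t ≤ 4*rt) :
    FF t = -1/4 + (t - 7*rt/2)^2/2 := by
  rw [FF, int_split 0 (rt/2) t ww ww_cont, int_split (rt/2) (5*rt/2) t ww ww_cont,
    int_piece 0 (rt/2) (rt/2) 1 ww (by nlinarith [rt_pos]) wp1,
    int_piece (rt/2) (5*rt/2) (3*rt/2) (-1) ww (by nlinarith [rt_pos]) wp2,
    int_piece (5*rt/2) t (-(7*rt/2)) 1 ww h1 (fun s hs => wp3 s ⟨hs.1, le_trans hs.2 h2⟩)]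
  linear_combination (-1/8 : ℝ) * rt_sq

lemma AA_eval1 (t : ℝ) (h1 : 0 ≤ t) (h2 : t ≤ rt/2) : AA t = rt*t/2 + t^2/2 := by
  rw [AA, int_piece 0 t (rt/2) 1 _ h1 (fun s hs => aq1 s ⟨hs.1, le_trans hs.2 h2⟩)]
  ring

lemma AA_eval2 (t : ℝ) (h1 : rt/2 ≤ t) (h2 : t ≤ 3*rt/2) :
    AA t = -1/2 + 3*rt*t/2 - t^2/2 := by
  rw [AA, int_split 0 (rt/2) t _ aww_cont,
    int_piece 0 (rt/2) (rt/2) 1 _ (by nlinarith [rt_pos]) aq1,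
    int_piece (rt/2) t (3*rt/2) (-1) _ h1 (fun s hs => aq2 s ⟨hs.1, le_trans hs.2 h2⟩)]
  linear_combination (-1/4 : ℝ) * rt_sq

lemma AA_eval3 (t : ℝ) (h1 : 3*rt/2 ≤ t) (h2 : t ≤ 5*rt/2) :
    AA t = 7/4 + (t - 3*rt/2)^2/2 := by
  rw [AA, int_split 0 (rt/2) t _ aww_cont, int_split (rt/2) (3*rt/2) t _ aww_cont,
    int_piece 0 (rt/2) (rt/2) 1 _ (by nlinarith [rt_pos]) aq1,
    int_piece (rt/2) (3*rt/2) (3*rt/2) (-1) _ (by nlinarith [rt_pos]) aq2,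
    int_piece (3*rt/2) t (-(3*rt/2)) 1 _ h1 (fun s hs => aq3 s ⟨hs.1, le_trans hs.2 h2⟩)]
  linear_combination (7/8 : ℝ) * rt_sq

lemma AA_eval4 (t : ℝ) (h1 : 5*rt/2 ≤ t) (h2 : t ≤ 7*rt/2) :
    AA t = 15/4 - (7*rt/2 - t)^2/2 := by
  rw [AA, int_split 0 (rt/2) t _ aww_cont, int_split (rt/2) (3*rt/2) t _ aww_cont,
    int_split (3*rt/2) (5*rt/2) t _ aww_cont,
    int_piece 0 (rt/2) (rt/2) 1 _ (by nlinarith [rt_pos]) aq1,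
    int_piece (rt/2) (3*rt/2) (3*rt/2) (-1) _ (by nlinarith [rt_pos]) aq2,
    int_piece (3*rt/2) (5*rt/2) (-(3*rt/2)) 1 _ (by nlinarith [rt_pos]) aq3,
    int_piece (5*rt/2) t (7*rt/2) (-1) _ h1 (fun s hs => aq4 s ⟨hs.1, le_trans hs.2 h2⟩)]
  linear_combination (15/8 : ℝ) * rt_sq

lemma AA_eval5 (t : ℝ) (h1 : 7*rt/2 ≤ t) (h2 : t ≤ 4*rt) :
    AA t = 15/4 + (t - 7*rt/2)^2/2 := by
  rw [AA, int_split 0 (rt/2) t _ aww_cont, int_split (rt/2) (3*rt/2) t _ aww_cont,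
    int_split (3*rt/2) (5*rt/2) t _ aww_cont, int_split (5*rt/2) (7*rt/2) t _ aww_cont,
    int_piece 0 (rt/2) (rt/2) 1 _ (by nlinarith [rt_pos]) aq1,
    int_piece (rt/2) (3*rt/2) (3*rt/2) (-1) _ (by nlinarith [rt_pos]) aq2,
    int_piece (3*rt/2) (5*rt/2) (-(3*rt/2)) 1 _ (by nlinarith [rt_pos]) aq3,
    int_piece (5*rt/2) (7*rt/2) (7*rt/2) (-1) _ (by nlinarith [rt_pos]) aq4,
    int_piece (7*rt/2) t (-(7*rt/2)) 1 _ h1 (fun s hs => aq5 s ⟨hs.1, le_trans hs.2 h2⟩)]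
  linear_combination (15/8 : ℝ) * rt_sq

lemma FF_per : Function.Periodic FF (4*rt) := by
  intro t
  have h1 : FF (t + 4*rt) = FF t + ∫ s in t..(t + 4*rt), ww s := by
    rw [FF, FF, int_split 0 t (t + 4*rt) ww ww_cont]
  have h2 : (∫ s in t..(t + 4*rt), ww s) = ∫ s in (0:ℝ)..(0 + 4*rt), ww s :=
    ww_per.intervalIntegral_add_eq t 0
  have h3 : FF (4*rt) = 0 := by
    rw [FF_eval3 (4*rt) (by nlinarith [rt_pos]) le_rfl]
    linear_combination (1/8 : ℝ) * rt_sq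
  rw [h1, h2, show (0:ℝ) + 4*rt = 4*rt by ring]
  rw [show (∫ s in (0:ℝ)..(4*rt), ww s) = FF (4*rt) from rfl, h3, add_zero]

lemma GG_per : Function.Periodic (fun t => AA t - rt*t/2) (4*rt) := by
  intro t
  have h1 : AA (t + 4*rt) = AA t + ∫ s in t..(t + 4*rt), |ww s| := by
    rw [AA, AA, int_split 0 t (t + 4*rt) _ aww_cont]
  have hper : Function.Periodic (fun s => |ww s|) (4*rt) := fun s => by
    simp only [ww_per s]
  have h2 : (∫ s in t..(t + 4*rt), |ww s|) = ∫ s in (0:ℝ)..(0 + 4*rt), |ww s| :=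
    hper.intervalIntegral_add_eq t 0
  have h3 : AA (4*rt) = 4 := by
    rw [AA_eval5 (4*rt) (by nlinarith [rt_pos]) le_rfl]
    linear_combination (1/8 : ℝ) * rt_sq
  simp only
  rw [h1, h2, show (0:ℝ) + 4*rt = 4*rt by ring,
    show (∫ s in (0:ℝ)..(4*rt), |ww s|) = AA (4*rt) from rfl, h3]
  linear_combination (-2 : ℝ) * rt_sq

lemma reduce_mod (t : ℝ) : ∃ τ : ℝ, 0 ≤ τ ∧ τ ≤ 4*rt ∧ FF τ = FF t ∧
    AA t - rt*t/2 = AA τ - rt*τ/2 := by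
  have h4 : (0:ℝ) < 4*rt := by nlinarith [rt_pos]
  set n : ℤ := ⌊t / (4*rt)⌋ with hn
  have hfl : (n:ℝ) ≤ t / (4*rt) := Int.floor_le _
  have hfu : t / (4*rt) < n + 1 := Int.lt_floor_add_one _
  have hcancel : t / (4*rt) * (4*rt) = t := div_mul_cancel₀ t (ne_of_gt h4)
  refine ⟨t - n*(4*rt), ?_, ?_, ?_, ?_⟩
  · nlinarith [mul_le_mul_of_nonneg_right hfl h4.le]
  · nlinarith [mul_le_mul_of_nonneg_right hfu.le h4.le]
  · exact FF_per.sub_int_mul_eq n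
  · exact (GG_per.sub_int_mul_eq n).symm


lemma FF_bound (t : ℝ) : -1/4 ≤ FF t ∧ FF t ≤ 7/4 := by
  obtain ⟨τ, h0, h4, hFF, _⟩ := reduce_mod t
  rw [← hFF]
  rcases le_or_gt τ (rt/2) with hc | hc
  · rw [FF_eval1 τ h0 hc]
    constructor <;> nlinarith [rt_sq, rt_pos]
  rcases le_or_gt τ (5*rt/2) with hc2 | hc2
  · rw [FF_eval2 τ hc.le hc2]
    constructor <;> nlinarith [rt_sq, rt_pos, mul_nonneg (sub_nonneg.2 hc.le) (sub_nonneg.2 hc2),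
      sq_nonneg (τ - 3*rt/2)]
  · rw [FF_eval3 τ hc2.le h4]
    constructor <;> nlinarith [rt_sq, rt_pos, sq_nonneg (τ - 7*rt/2),
      mul_nonneg (sub_nonneg.2 hc2.le) (sub_nonneg.2 h4)]

lemma GG_nonneg (t : ℝ) : rt*t/2 ≤ AA t := by
  obtain ⟨τ, h0, h4, _, hG⟩ := reduce_mod t
  rw [← sub_nonneg, hG, sub_nonneg]
  rcases le_or_gt τ (rt/2) with hc | hc
  · rw [AA_eval1 τ h0 hc]; nlinarith [rt_sq, rt_pos]
  rcases le_or_gt τ (3*rt/2) with hc2 | hc2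
  · rw [AA_eval2 τ hc.le hc2]
    nlinarith [rt_sq, rt_pos, mul_nonneg (sub_nonneg.2 hc.le) (sub_nonneg.2 hc2)]
  rcases le_or_gt τ (5*rt/2) with hc3 | hc3
  · rw [AA_eval3 τ hc2.le hc3]; nlinarith [rt_sq, rt_pos, sq_nonneg (τ - 2*rt)]
  rcases le_or_gt τ (7*rt/2) with hc4 | hc4
  · rw [AA_eval4 τ hc3.le hc4]
    nlinarith [rt_sq, rt_pos, mul_nonneg (sub_nonneg.2 hc3.le) (sub_nonneg.2 hc4)]
  · rw [AA_eval5 τ hc4.le h4]; nlinarith [rt_sq, rt_pos, sq_nonneg (τ - 4*rt)]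

noncomputable def ffw (t : ℝ) : ℝ := -(3/4) + FF t

lemma ffw_deriv (t : ℝ) : HasDerivAt ffw (ww t) t := by
  have h := intervalIntegral.integral_hasDerivAt_right (ww_cont.intervalIntegrable 0 t)
    (ww_cont.stronglyMeasurableAtFilter _ _) ww_cont.continuousAt
  exact HasDerivAt.const_add (-(3/4) : ℝ) h

lemma div_rt (T : ℝ) : T / Real.sqrt 2 = rt * T / 2 := by
  rw [show Real.sqrt 2 = rt from rfl, div_eq_iff (ne_of_gt rt_pos)]
  linear_combination (-(T/2)) * rt_sq

/-- Membership in Landau's class `𝓛₂(T)`. -/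
def InL2 (T : ℝ) (f f' : ℝ → ℝ) : Prop :=
  (∀ t ∈ Icc 0 T, HasDerivWithinAt f (f' t) (Icc 0 T) t) ∧
  (∀ t ∈ Icc 0 T, |f t| ≤ 1) ∧
  LipschitzOnWith 1 f' (Icc 0 T)

lemma ffw_mem (T : ℝ) : InL2 T ffw ww := by
  refine ⟨fun t _ => (ffw_deriv t).hasDerivWithinAt, fun t _ => ?_, ww_lip.lipschitzOnWith⟩
  have h := FF_bound t
  rw [abs_le]
  unfold ffw
  constructor <;> [linarith [h.1]; linarith [h.2]]

section Upper

variable {T : ℝ} {f g : ℝ → ℝ}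

lemma g_cont (hf : InL2 T f g) : ContinuousOn g (Icc 0 T) := hf.2.2.continuousOn

lemma absg_int (hf : InL2 T f g) {a b : ℝ} (h0 : 0 ≤ a) (hab : a ≤ b) (hbT : b ≤ T) :
    IntervalIntegrable (fun t => |g t|) volume a b := by
  apply ContinuousOn.intervalIntegrable
  apply ((g_cont hf).abs).mono
  rw [uIcc_of_le hab]
  exact Icc_subset_Icc h0 hbT

lemma g_int (hf : InL2 T f g) {a b : ℝ} (h0 : 0 ≤ a) (hab : a ≤ b) (hbT : b ≤ T) :
    IntervalIntegrable g volume a b := by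
  apply ContinuousOn.intervalIntegrable
  apply (g_cont hf).mono
  rw [uIcc_of_le hab]
  exact Icc_subset_Icc h0 hbT

lemma ftc_ab (hf : InL2 T f g) {a b : ℝ} (h0 : 0 ≤ a) (hab : a ≤ b) (hbT : b ≤ T) :
    ∫ t in a..b, g t = f b - f a := by
  apply integral_eq_sub_of_hasDeriv_right_of_le hab
  · intro t ht
    exact ((hf.1 t (Icc_subset_Icc h0 hbT ht)).continuousWithinAt).mono
      (Icc_subset_Icc h0 hbT)
  · intro x hx
    have hx' : x ∈ Icc (0:ℝ) T := ⟨by linarith [hx.1], by linarith [hx.2]⟩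
    have hd := hf.1 x hx'
    have hnhds : Icc (0:ℝ) T ∈ nhds x := Icc_mem_nhds (by linarith [hx.1]) (by linarith [hx.2])
    exact (hd.hasDerivAt hnhds).hasDerivWithinAt
  · exact g_int hf h0 hab hbT

lemma f_diff_le (hf : InL2 T f g) {a b : ℝ} (ha : a ∈ Icc (0:ℝ) T) (hb : b ∈ Icc (0:ℝ) T) :
    |f b - f a| ≤ 2 := by
  have h1 := hf.2.1 a ha
  have h2 := hf.2.1 b hb
  rw [abs_le] at *
  constructor <;> [linarith [h1.2, h2.1]; linarith [h1.1, h2.2]]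

lemma signC (hf : InL2 T f g) {a b : ℝ} (h0 : 0 ≤ a) (hab : a ≤ b) (hbT : b ≤ T)
    (hnz : ∀ t ∈ Ioo a b, g t ≠ 0) : (∫ t in a..b, |g t|) ≤ 2 := by
  rcases eq_or_lt_of_le hab with rfl | hlt
  · simp
  have hsub : Icc a b ⊆ Icc 0 T := Icc_subset_Icc h0 hbT
  have hgab : ContinuousOn g (Icc a b) := (g_cont hf).mono hsub
  have hmid : (a+b)/2 ∈ Ioo a b := ⟨by linarith, by linarith⟩
  have hdich : (∀ t ∈ Icc a b, 0 ≤ g t) ∨ (∀ t ∈ Icc a b, g t ≤ 0) := by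
    rcases lt_or_ge 0 (g ((a+b)/2)) with hpos | hneg
    · left
      intro t ht
      by_contra hlt0
      push_neg at hlt0
      rcases le_total t ((a+b)/2) with h | h
      · obtain ⟨z, hz, hz0⟩ := intermediate_value_Ioo h
          (hgab.mono (Icc_subset_Icc ht.1 hmid.2.le)) ⟨hlt0, hpos⟩
        exact hnz z ⟨lt_of_le_of_lt ht.1 hz.1, lt_of_lt_of_le hz.2 hmid.2.le⟩ hz0
      · obtain ⟨z, hz, hz0⟩ := intermediate_value_Ioo' h
          (hgab.mono (Icc_subset_Icc hmid.1.le ht.2)) ⟨hlt0, hpos⟩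
        exact hnz z ⟨lt_trans hmid.1 hz.1, lt_of_lt_of_le hz.2 ht.2⟩ hz0
    · right
      intro t ht
      by_contra hlt0
      push_neg at hlt0
      have hneg' : g ((a+b)/2) < 0 :=
        lt_of_le_of_ne hneg (hnz ((a+b)/2) hmid)
      rcases le_total t ((a+b)/2) with h | h
      · obtain ⟨z, hz, hz0⟩ := intermediate_value_Ioo' h
          (hgab.mono (Icc_subset_Icc ht.1 hmid.2.le)) ⟨hneg', hlt0⟩
        exact hnz z ⟨lt_of_le_of_lt ht.1 hz.1, lt_of_lt_of_le hz.2 hmid.2.le⟩ hz0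
      · obtain ⟨z, hz, hz0⟩ := intermediate_value_Ioo h
          (hgab.mono (Icc_subset_Icc hmid.1.le ht.2)) ⟨hneg', hlt0⟩
        exact hnz z ⟨lt_trans hmid.1 hz.1, lt_of_lt_of_le hz.2 ht.2⟩ hz0
  have hftc := ftc_ab hf h0 hab hbT
  have hfd := f_diff_le hf (hsub ⟨le_rfl, hab⟩) (hsub ⟨hab, le_rfl⟩)
  rw [abs_le] at hfd
  rcases hdich with hpos | hneg
  · have : (∫ t in a..b, |g t|) = ∫ t in a..b, g t := by
      apply intervalIntegral.integral_congr
      intro t ht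
      rw [uIcc_of_le hab] at ht
      exact abs_of_nonneg (hpos t ht)
    rw [this, hftc]
    linarith [hfd.2]
  · have : (∫ t in a..b, |g t|) = ∫ t in a..b, (fun t => - g t) t := by
      apply intervalIntegral.integral_congr
      intro t ht
      rw [uIcc_of_le hab] at ht
      exact abs_of_nonpos (hneg t ht)
    rw [this, intervalIntegral.integral_neg, hftc]
    linarith [hfd.1]

lemma zeroD (hf : InL2 T f g) {a b : ℝ} (h0 : 0 ≤ a) (hab : a ≤ b) (hbT : b ≤ T)
    (hga : g a = 0) (hgb : g b = 0) : (∫ t in a..b, |g t|) ≤ (b-a)^2/4 := by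
  have hlip := hf.2.2
  have hsub : Icc a b ⊆ Icc 0 T := Icc_subset_Icc h0 hbT
  set m := (a+b)/2 with hm
  have ham : a ≤ m := by rw [hm]; linarith
  have hmb : m ≤ b := by rw [hm]; linarith
  have hbound1 : ∀ t ∈ Icc a m, |g t| ≤ -a + 1*t := by
    intro t ht
    have htI : t ∈ Icc (0:ℝ) T := hsub ⟨ht.1, le_trans ht.2 hmb⟩
    have haI : a ∈ Icc (0:ℝ) T := hsub ⟨le_rfl, hab⟩
    have := hlip.dist_le_mul t htI a haI
    rw [Real.dist_eq, Real.dist_eq, hga, sub_zero, NNReal.coe_one, one_mul] at this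
    calc |g t| ≤ |t - a| := this
      _ = -a + 1*t := by rw [abs_of_nonneg (by linarith [ht.1])]; ring
  have hbound2 : ∀ t ∈ Icc m b, |g t| ≤ b + (-1)*t := by
    intro t ht
    have htI : t ∈ Icc (0:ℝ) T := hsub ⟨le_trans ham ht.1, ht.2⟩
    have hbI : b ∈ Icc (0:ℝ) T := hsub ⟨hab, le_rfl⟩
    have := hlip.dist_le_mul t htI b hbI
    rw [Real.dist_eq, Real.dist_eq, hgb, sub_zero, NNReal.coe_one, one_mul] at this
    calc |g t| ≤ |t - b| := this
      _ = b + (-1)*t := by rw [abs_of_nonpos (by linarith [ht.2])]; ring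
  have hint1 : (∫ t in a..m, |g t|) ≤ ∫ t in a..m, (-a + 1*t) := by
    apply intervalIntegral.integral_mono_on ham
      (absg_int hf h0 ham (le_trans hmb hbT))
      ((continuous_const.add (continuous_const.mul continuous_id')).intervalIntegrable _ _)
    exact hbound1
  have hint2 : (∫ t in m..b, |g t|) ≤ ∫ t in m..b, (b + (-1)*t) := by
    apply intervalIntegral.integral_mono_on hmb
      (absg_int hf (le_trans h0 ham) hmb hbT)
      ((continuous_const.add (continuous_const.mul continuous_id')).intervalIntegrable _ _)
    exact hbound2
  have hsplit : (∫ t in a..b, |g t|) = (∫ t in a..m, |g t|) + ∫ t in m..b, |g t| :=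
    (integral_add_adjacent_intervals (absg_int hf h0 ham (le_trans hmb hbT))
      (absg_int hf (le_trans h0 ham) hmb hbT)).symm
  rw [int_lin] at hint1
  rw [int_lin] at hint2
  rw [hsplit, hm]
  rw [hm] at hint1 hint2
  nlinarith [hint1, hint2]



lemma sq_quarter_le (x : ℝ) (h0 : 0 ≤ x) (h2 : x ≤ 2*rt) : x^2/4 ≤ rt*x/2 := by
  nlinarith [rt_pos]

lemma key (hf : InL2 T f g) : ∀ n : ℕ, ∀ α β : ℝ, α ∈ Icc (0:ℝ) T → β ∈ Icc (0:ℝ) T →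
    g α = 0 → g β = 0 → α ≤ β → β - α ≤ n * (2*rt) →
    (∫ t in α..β, |g t|) ≤ rt * (β - α) / 2 := by
  intro n
  induction n with
  | zero =>
    intro α β hα hβ hgα hgβ hαβ hlen
    push_cast at hlen
    have : β = α := by linarith
    rw [this]
    simp
  | succ n ih =>
    intro α β hα hβ hgα hgβ hαβ hlen
    push_cast at hlen
    by_cases hsmall : β - α ≤ 2*rt
    · calc (∫ t in α..β, |g t|) ≤ (β-α)^2/4 := zeroD hf hα.1 hαβ hβ.2 hgα hgβ
        _ ≤ rt*(β-α)/2 := sq_quarter_le _ (by linarith) hsmall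
    · push_neg at hsmall
      have hZc : IsClosed {t : ℝ | t ∈ Icc (0:ℝ) T ∧ g t = 0} := by
        have := (g_cont hf).preimage_isClosed_of_isClosed isClosed_Icc
          (isClosed_singleton (x := (0:ℝ)))
        exact this
      set S1 := {t : ℝ | t ∈ Icc (0:ℝ) T ∧ g t = 0} ∩ Icc α (α + 2*rt) with hS1
      set S2 := {t : ℝ | t ∈ Icc (0:ℝ) T ∧ g t = 0} ∩ Icc (α + 2*rt) β with hS2
      have hS1ne : S1.Nonempty := ⟨α, ⟨hα, hgα⟩, le_rfl, by nlinarith [rt_pos]⟩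
      have hS2ne : S2.Nonempty := ⟨β, ⟨hβ, hgβ⟩, by linarith, le_rfl⟩
      have hS1c : IsClosed S1 := hZc.inter isClosed_Icc
      have hS2c : IsClosed S2 := hZc.inter isClosed_Icc
      have hS1b : BddAbove S1 := (bddAbove_Icc (a := α) (b := α + 2*rt)).mono
        (inter_subset_right)
      have hS2b : BddBelow S2 := (bddBelow_Icc (a := β) (b := α + 2*rt)).mono
        (inter_subset_right)
      set γ := sSup S1 with hγdef
      set δ := sInf S2 with hδdef
      have hγ : γ ∈ S1 := hS1c.csSup_mem hS1ne hS1b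
      have hδ : δ ∈ S2 := hS2c.csInf_mem hS2ne hS2b
      obtain ⟨⟨hγIcc, hgγ⟩, hγlo, hγhi⟩ := hγ
      obtain ⟨⟨hδIcc, hgδ⟩, hδlo, hδhi⟩ := hδ
      have hγδ : γ ≤ δ := by linarith
      have hnz : ∀ t ∈ Ioo γ δ, g t ≠ 0 := by
        intro t ht hg0
        have htI : t ∈ Icc (0:ℝ) T := ⟨le_trans hγIcc.1 ht.1.le, le_trans ht.2.le hδIcc.2⟩
        rcases le_or_gt t (α + 2*rt) with hc | hc
        · have htS1 : t ∈ S1 := ⟨⟨htI, hg0⟩, le_trans hγlo ht.1.le, hc⟩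
          exact absurd (le_csSup hS1b htS1) (not_le.mpr ht.1)
        · have htS2 : t ∈ S2 := ⟨⟨htI, hg0⟩, hc.le, le_trans ht.2.le hδhi⟩
          exact absurd (csInf_le hS2b htS2) (not_le.mpr ht.2)
      have B1 : (∫ t in α..γ, |g t|) ≤ rt*(γ-α)/2 := by
        calc (∫ t in α..γ, |g t|) ≤ (γ-α)^2/4 := zeroD hf hα.1 hγlo hγIcc.2 hgα hgγ
          _ ≤ rt*(γ-α)/2 := sq_quarter_le _ (by linarith) (by linarith)
      have B2 : (∫ t in γ..δ, |g t|) ≤ rt*(δ-γ)/2 := by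
        rcases le_or_gt (δ - γ) (2*rt) with hc | hc
        · calc (∫ t in γ..δ, |g t|) ≤ (δ-γ)^2/4 := zeroD hf hγIcc.1 hγδ hδIcc.2 hgγ hgδ
            _ ≤ rt*(δ-γ)/2 := sq_quarter_le _ (by linarith) hc
        · calc (∫ t in γ..δ, |g t|) ≤ 2 := signC hf hγIcc.1 hγδ hδIcc.2 hnz
            _ ≤ rt*(δ-γ)/2 := by nlinarith [rt_sq, rt_pos]
      have B3 : (∫ t in δ..β, |g t|) ≤ rt*(β-δ)/2 := by
        apply ih δ β hδIcc hβ hgδ hgβ (by linarith)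
        push_cast
        linarith
      have hsplit : (∫ t in α..β, |g t|) =
          (∫ t in α..γ, |g t|) + (∫ t in γ..δ, |g t|) + ∫ t in δ..β, |g t| := by
        rw [integral_add_adjacent_intervals (absg_int hf hα.1 hγlo hγIcc.2)
          (absg_int hf hγIcc.1 hγδ hδIcc.2),
          integral_add_adjacent_intervals (absg_int hf hα.1 (by linarith) hδIcc.2)
          (absg_int hf hδIcc.1 (by linarith) hβ.2)]
      rw [hsplit]
      linarith

lemma upper_per (hT : 0 < T) (hf : InL2 T f g) :
    (∫ t in (0:ℝ)..T, |g t|) ≤ rt*T/2 + 4 := by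
  by_cases hZ : ∃ t, t ∈ Icc (0:ℝ) T ∧ g t = 0
  · have hZc : IsClosed {t : ℝ | t ∈ Icc (0:ℝ) T ∧ g t = 0} := by
      exact (g_cont hf).preimage_isClosed_of_isClosed isClosed_Icc
        (isClosed_singleton (x := (0:ℝ)))
    set Z := {t : ℝ | t ∈ Icc (0:ℝ) T ∧ g t = 0} with hZdef
    have hZne : Z.Nonempty := hZ
    have hZsub : Z ⊆ Icc (0:ℝ) T := fun t ht => ht.1
    have hZba : BddAbove Z := (bddAbove_Icc (a := (0:ℝ)) (b := T)).mono hZsub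
    have hZbb : BddBelow Z := (bddBelow_Icc (a := T) (b := (0:ℝ))).mono hZsub
    set s := sInf Z with hsdef
    set e := sSup Z with hedef
    have hs : s ∈ Z := hZc.csInf_mem hZne hZbb
    have he : e ∈ Z := hZc.csSup_mem hZne hZba
    have hse : s ≤ e := csInf_le_csSup hZne hZbb hZba
    have I1 : (∫ t in (0:ℝ)..s, |g t|) ≤ 2 := by
      apply signC hf le_rfl hs.1.1 hs.1.2
      intro t ht hg0
      have : t ∈ Z := ⟨⟨ht.1.le, le_trans ht.2.le hs.1.2⟩, hg0⟩
      exact absurd (csInf_le hZbb this) (not_le.mpr ht.2)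
    have I3 : (∫ t in e..T, |g t|) ≤ 2 := by
      apply signC hf he.1.1 he.1.2 le_rfl
      intro t ht hg0
      have : t ∈ Z := ⟨⟨le_trans he.1.1 ht.1.le, ht.2.le⟩, hg0⟩
      exact absurd (le_csSup hZba this) (not_le.mpr ht.1)
    have I2 : (∫ t in s..e, |g t|) ≤ rt*(e-s)/2 := by
      obtain ⟨n, hn⟩ := exists_nat_ge ((e - s) / (2*rt))
      apply key hf n s e hs.1 he.1 hs.2 he.2 hse
      have h2rt : (0:ℝ) < 2*rt := by nlinarith [rt_pos]
      rw [div_le_iff₀ h2rt] at hn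
      linarith
    have hsplit : (∫ t in (0:ℝ)..T, |g t|) =
        (∫ t in (0:ℝ)..s, |g t|) + (∫ t in s..e, |g t|) + ∫ t in e..T, |g t| := by
      rw [integral_add_adjacent_intervals (absg_int hf le_rfl hs.1.1 hs.1.2)
        (absg_int hf hs.1.1 hse he.1.2),
        integral_add_adjacent_intervals (absg_int hf le_rfl (le_trans hs.1.1 hse) he.1.2)
        (absg_int hf he.1.1 he.1.2 le_rfl)]
    rw [hsplit]
    have : rt*(e-s)/2 ≤ rt*T/2 := by
      have h1 : e - s ≤ T := by linarith [hs.1.1, he.1.2]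
      nlinarith [rt_pos]
    linarith
  · push_neg at hZ
    have : (∫ t in (0:ℝ)..T, |g t|) ≤ 2 := by
      apply signC hf le_rfl hT.le le_rfl
      intro t ht
      exact hZ t ⟨ht.1.le, ht.2.le⟩
    nlinarith [rt_pos, hT]

end Upper

/-- `σ₁(T) = sup_{f ∈ 𝓛₂(T)} ∫₀ᵀ |f'(t)| dt`. -/
noncomputable def sigma1 (T : ℝ) : ℝ :=
  sSup {y : ℝ | ∃ f f' : ℝ → ℝ, InL2 T f f' ∧ y = ∫ t in (0:ℝ)..T, |f' t|}

/-- For every `T > 0`, `T/√2 ≤ σ₁(T) ≤ T/√2 + 5`. -/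
theorem sigma1_asymptotics (T : ℝ) (hT : 0 < T) :
    T / Real.sqrt 2 ≤ sigma1 T ∧ sigma1 T ≤ T / Real.sqrt 2 + 5 := by
  have hmem : (∫ t in (0:ℝ)..T, |ww t|) ∈
      {y : ℝ | ∃ f f' : ℝ → ℝ, InL2 T f f' ∧ y = ∫ t in (0:ℝ)..T, |f' t|} :=
    ⟨ffw, ww, ffw_mem T, rfl⟩
  have hub : ∀ y ∈ {y : ℝ | ∃ f f' : ℝ → ℝ, InL2 T f f' ∧ y = ∫ t in (0:ℝ)..T, |f' t|},
      y ≤ rt*T/2 + 4 := by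
    rintro y ⟨f, g, hfg, rfl⟩
    exact upper_per hT hfg
  have hbdd : BddAbove {y : ℝ | ∃ f f' : ℝ → ℝ, InL2 T f f' ∧ y = ∫ t in (0:ℝ)..T, |f' t|} :=
    ⟨rt*T/2 + 4, fun y hy => hub y hy⟩
  constructor
  · calc T / Real.sqrt 2 = rt * T / 2 := div_rt T
      _ ≤ AA T := GG_nonneg T
      _ = ∫ t in (0:ℝ)..T, |ww t| := rfl
      _ ≤ sigma1 T := le_csSup hbdd hmem
  · apply csSup_le ⟨_, hmem⟩
    intro y hy
    have h1 := hub y hy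
    rw [div_rt]
    linarith
end
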